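/- Let q ∈ ℝ^{1+n} be null future-directed (q ≠ 0 and q^0 = |q⃗|), and let γ : [0,1] → ℝ^{1+n} be a future-directed causal curve with γ(0) = 0 and γ(1) = q. Then γ is a monotone reparametrization of the null segment from 0 to q: there exists a nondecreasing function t : [0,1] → [0,1] with t(0) = 0, t(1) = 1 and γ(s) = t(s)·q for every s ∈ [0,1]. In particular the image of γ is contained in the null ray { s·q : s ∈ [0,1] }. -/

import Mathlib

open Set MeasureTheory Filter Topology
open scoped RealInnerProductSpace

noncomputable section

/-- Minkowski space-time `ℝ^{1+n} = ℝ × ℝ^n`. -/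
abbrev Mink (n : ℕ) : Type := ℝ × EuclideanSpace ℝ (Fin n)

/-- A vector is timelike future-directed if `v⁰ > |v⃗|`. -/
def timelikeFD {n : ℕ} (v : Mink n) : Prop := ‖v.2‖ < v.1

/-- A vector is causal future-directed if `v ≠ 0` and `v⁰ ≥ |v⃗|`. -/
def causalFD {n : ℕ} (v : Mink n) : Prop := v ≠ 0 ∧ ‖v.2‖ ≤ v.1

/-- A vector is null future-directed if `v ≠ 0` and `v⁰ = |v⃗|`. -/
def nullFD {n : ℕ} (v : Mink n) : Prop := v ≠ 0 ∧ ‖v.2‖ = v.1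

/-- A vector is causal past-directed if `-v` is causal future-directed. -/
def causalPD {n : ℕ} (v : Mink n) : Prop := causalFD (-v)

/-- The Minkowski bilinear form `η(x,y) = -x⁰y⁰ + ⟨x⃗,y⃗⟩`. -/
def minkBF {n : ℕ} (x y : Mink n) : ℝ := -(x.1 * y.1) + ⟪x.2, y.2⟫

/-- The Euclidean norm on `ℝ^{1+n}`. -/
def eNorm {n : ℕ} (v : Mink n) : ℝ := Real.sqrt (v.1 ^ 2 + ‖v.2‖ ^ 2)

/-- A future-directed causal curve defined on `S ⊆ ℝ`: locally Lipschitz, with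
almost-everywhere derivative causal future-directed. -/
def IsCausalCurveOn {n : ℕ} (γ : ℝ → Mink n) (S : Set ℝ) : Prop :=
  (∀ a b : ℝ, Icc a b ⊆ S → ∃ K : NNReal, LipschitzOnWith K γ (Icc a b)) ∧
  (∀ᵐ s ∂(volume.restrict S), ∃ v : Mink n, HasDerivWithinAt γ v S s ∧ causalFD v)

/-- A future-directed timelike curve defined on `S ⊆ ℝ`. -/
def IsTimelikeCurveOn {n : ℕ} (γ : ℝ → Mink n) (S : Set ℝ) : Prop :=
  (∀ a b : ℝ, Icc a b ⊆ S → ∃ K : NNReal, LipschitzOnWith K γ (Icc a b)) ∧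
  (∀ᵐ s ∂(volume.restrict S), ∃ v : Mink n, HasDerivWithinAt γ v S s ∧ timelikeFD v)

/-- A past-directed causal curve defined on `S ⊆ ℝ`. -/
def IsPastCausalCurveOn {n : ℕ} (γ : ℝ → Mink n) (S : Set ℝ) : Prop :=
  (∀ a b : ℝ, Icc a b ⊆ S → ∃ K : NNReal, LipschitzOnWith K γ (Icc a b)) ∧
  (∀ᵐ s ∂(volume.restrict S), ∃ v : Mink n, HasDerivWithinAt γ v S s ∧ causalPD v)

/-- `chron p q`: there is a future-directed timelike curve from `p` to `q`. -/
def chron {n : ℕ} (p q : Mink n) : Prop :=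
  ∃ (a b : ℝ) (γ : ℝ → Mink n), a < b ∧ IsTimelikeCurveOn γ (Icc a b) ∧ γ a = p ∧ γ b = q

/-- `caus p q`: `q = p`, or there is a future-directed causal curve from `p` to `q`. -/
def caus {n : ℕ} (p q : Mink n) : Prop :=
  p = q ∨ ∃ (a b : ℝ) (γ : ℝ → Mink n), a < b ∧ IsCausalCurveOn γ (Icc a b) ∧ γ a = p ∧ γ b = q

/-- `causPast p q`: `q = p`, or there is a past-directed causal curve from `p` to `q`. -/
def causPast {n : ℕ} (p q : Mink n) : Prop :=
  p = q ∨ ∃ (a b : ℝ) (γ : ℝ → Mink n), a < b ∧ IsPastCausalCurveOn γ (Icc a b) ∧ γ a = p ∧ γ b = q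

/-- The timelike future `I⁺(U)`. -/
def Iplus {n : ℕ} (U : Set (Mink n)) : Set (Mink n) := {q | ∃ p ∈ U, chron p q}

/-- The causal future `J⁺(U)`. -/
def Jplus {n : ℕ} (U : Set (Mink n)) : Set (Mink n) := {q | ∃ p ∈ U, caus p q}

/-- The causal past `J⁻(U)`. -/
def Jminus {n : ℕ} (U : Set (Mink n)) : Set (Mink n) := {q | ∃ p ∈ U, causPast p q}

/-- An inextendible future-directed timelike curve: defined on all of `ℝ`, locally
Lipschitz, parameterized by Euclidean arclength, with a.e. timelike future derivative. -/
def IsInextTimelike {n : ℕ} (γ : ℝ → Mink n) : Prop :=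
  LocallyLipschitz γ ∧
  ∀ᵐ s : ℝ, ∃ v : Mink n, HasDerivAt γ v s ∧ timelikeFD v ∧ eNorm v = 1



lemma monotoneOn_of_ae_deriv_nonneg {g : ℝ → ℝ} {K : NNReal} {a b : ℝ}
    (hg : LipschitzOnWith K g (Icc a b))
    (hd : ∀ᵐ s ∂(volume.restrict (Icc a b)),
      ∃ d : ℝ, HasDerivWithinAt g d (Icc a b) s ∧ 0 ≤ d) :
    MonotoneOn g (Icc a b) := by
  have hN : (volume.restrict (Icc a b))
      {s | ¬ ∃ d : ℝ, HasDerivWithinAt g d (Icc a b) s ∧ 0 ≤ d} = 0 := hd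
  obtain ⟨T, hTsub, hTmeas, hT0⟩ := exists_measurable_superset_of_null hN
  have hNnull : volume (T ∩ Icc a b) = 0 := by
    rwa [Measure.restrict_apply hTmeas] at hT0
  set N : Set ℝ := T ∩ Icc a b with hNdef
  have hNgood : ∀ s ∈ Icc a b, s ∉ N →
      ∃ d : ℝ, HasDerivWithinAt g d (Icc a b) s ∧ 0 ≤ d := by
    intro s hs hsN
    by_contra h
    exact hsN ⟨hTsub h, hs⟩
  intro x hx y hy hxy
  rcases eq_or_lt_of_le hxy with rfl | hxy
  · exact le_rfl
  have key : ∀ ε : ℝ, ε ∈ Ioo (0:ℝ) 1 → g x - g y ≤ ε * ((y - x) + (K + 2)) := by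
    intro ε hε
    obtain ⟨hε0, hε1⟩ := hε
    obtain ⟨U, hNU, hUopen, hUvol⟩ := Set.exists_isOpen_lt_of_lt N (ENNReal.ofReal ε)
      (by rw [hNnull]; exact ENNReal.ofReal_pos.2 hε0)
    have hUfin : ∀ s : Set ℝ, s ⊆ U → volume s ≠ ⊤ :=
      fun s hs => (lt_of_le_of_lt (measure_mono hs) (hUvol.trans_le le_top)).ne
    set m : ℝ → ℝ := fun u => (volume (U ∩ Ioc x u)).toReal with hm
    have hmadd : ∀ u v : ℝ, x ≤ u → u ≤ v →
        m v = m u + (volume (U ∩ Ioc u v)).toReal := by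
      intro u v hxu huv
      have hsplit : U ∩ Ioc x v = (U ∩ Ioc x u) ∪ (U ∩ Ioc u v) := by
        rw [← Set.inter_union_distrib_left, Set.Ioc_union_Ioc_eq_Ioc hxu huv]
      have hdisj : Disjoint (U ∩ Ioc x u) (U ∩ Ioc u v) :=
        (Set.Ioc_disjoint_Ioc_of_le le_rfl).mono Set.inter_subset_right Set.inter_subset_right
      have hvol : volume (U ∩ Ioc x v) = volume (U ∩ Ioc x u) + volume (U ∩ Ioc u v) := by
        rw [hsplit, measure_union hdisj (hUopen.measurableSet.inter measurableSet_Ioc)]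
      simp only [hm]
      rw [hvol, ENNReal.toReal_add (hUfin _ Set.inter_subset_left)
        (hUfin _ Set.inter_subset_left)]
    have hIocle : ∀ u v : ℝ, u ≤ v → (volume (U ∩ Ioc u v)).toReal ≤ v - u := by
      intro u v huv
      have h1 : volume (U ∩ Ioc u v) ≤ ENNReal.ofReal (v - u) := by
        rw [← Real.volume_Ioc]; exact measure_mono Set.inter_subset_right
      calc (volume (U ∩ Ioc u v)).toReal ≤ (ENNReal.ofReal (v - u)).toReal :=
            ENNReal.toReal_le_toReal (hUfin _ Set.inter_subset_left) ENNReal.ofReal_ne_top |>.2 h1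
        _ = v - u := ENNReal.toReal_ofReal (by linarith)
    have hmmono : ∀ u v : ℝ, u ≤ v → m u ≤ m v := fun u v huv =>
      ENNReal.toReal_le_toReal (hUfin _ Set.inter_subset_left) (hUfin _ Set.inter_subset_left)
        |>.2 (measure_mono (Set.inter_subset_inter_right _ (Set.Ioc_subset_Ioc le_rfl huv)))
    have hmx : m x = 0 := by simp [hm]
    have hmnonneg : ∀ u, 0 ≤ m u := fun u => ENNReal.toReal_nonneg
    have hmcont : ContinuousOn m (Icc x y) := by
      apply LipschitzOnWith.continuousOn (K := 1) (s := Icc x y)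
      apply LipschitzOnWith.of_dist_le_mul
      intro u hu v hv
      rw [Real.dist_eq, Real.dist_eq, NNReal.coe_one, one_mul]
      wlog huv : v ≤ u generalizing u v
      · rw [abs_sub_comm (m u) (m v), abs_sub_comm u v]
        exact this v hv u hu (le_of_not_ge huv)
      have h1 : m u - m v = (volume (U ∩ Ioc v u)).toReal := by
        rw [hmadd v u hv.1 huv]; ring
      rw [abs_of_nonneg (by linarith [hmmono v u huv] : (0:ℝ) ≤ m u - m v),
        abs_of_nonneg (by linarith : (0:ℝ) ≤ u - v), h1]
      exact hIocle v u huv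
    have hgcont : ContinuousOn g (Icc x y) :=
      (hg.continuousOn).mono (Icc_subset_Icc hx.1 hy.2)
    -- the set where the key inequality holds
    set S : Set ℝ := {u : ℝ | -(ε * (u - x)) - (K + 2*ε) * m u ≤ g u - g x} with hS
    have hSclosed : IsClosed (S ∩ Icc x y) := by
      have hc : ContinuousOn (fun u => g u - g x + ε * (u - x) + (K + 2*ε) * m u) (Icc x y) := by
        apply ContinuousOn.add
        apply ContinuousOn.add
        · exact hgcont.sub continuousOn_const
        · exact (continuousOn_const.mul (continuousOn_id.sub continuousOn_const))
        · exact continuousOn_const.mul hmcont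
      have : S ∩ Icc x y = Icc x y ∩ (fun u => g u - g x + ε * (u - x) + (K + 2*ε) * m u) ⁻¹' (Ici 0) := by
        ext u
        simp only [hS, Set.mem_inter_iff, Set.mem_setOf_eq, Set.mem_preimage, Set.mem_Ici]
        constructor
        · rintro ⟨h1, h2⟩; exact ⟨h2, by linarith⟩
        · rintro ⟨h2, h1⟩; exact ⟨by linarith, h2⟩
      rw [this]
      exact hc.preimage_isClosed_of_isClosed isClosed_Icc isClosed_Ici
    have hxS : x ∈ S := by
      simp only [hS, Set.mem_setOf_eq, hmx, sub_self, mul_zero, neg_zero, zero_sub]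
      linarith [hmnonneg x]
    have hgt : ∀ u ∈ S ∩ Ico x y, ∀ z' ∈ Ioi u, (S ∩ Ioc u z').Nonempty := by
      intro u hu z' hz'
      have huS : u ∈ S := hu.1
      have hux : x ≤ u := hu.2.1
      have huy : u < y := hu.2.2
      have huab : u ∈ Icc a b := ⟨le_trans hx.1 hux, le_trans huy.le hy.2⟩
      set w := min z' y with hw
      have huw : u < w := lt_min hz' huy
      by_cases huU : u ∈ U
      · -- inside the open set: use Lipschitz bound
        obtain ⟨δ, hδ0, hδ⟩ := Metric.isOpen_iff.1 hUopen u huU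
        set z := min w (u + δ/2) with hz
        have huz : u < z := lt_min huw (by linarith)
        have hzw : z ≤ w := min_le_left _ _
        have hsub : Ioc u z ⊆ U := by
          intro t ht
          apply hδ
          rw [Metric.mem_ball, Real.dist_eq, abs_of_pos (by linarith [ht.1] : (0:ℝ) < t - u)]
          have : t ≤ u + δ/2 := le_trans ht.2 (min_le_right _ _)
          linarith
        have hmz : m z = m u + (z - u) := by
          rw [hmadd u z hux huz.le]
          congr 1
          rw [Set.inter_eq_self_of_subset_right hsub, Real.volume_Ioc,
            ENNReal.toReal_ofReal (by linarith : (0:ℝ) ≤ z - u)]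
        have hlip : |g z - g u| ≤ K * |z - u| := by
          have hz_mem : z ∈ Icc a b := ⟨le_trans huab.1 huz.le,
            le_trans (le_trans hzw (min_le_right _ _)) hy.2⟩
          have := hg.dist_le_mul z hz_mem u huab
          rwa [Real.dist_eq, Real.dist_eq] at this
        have hglow : -(K : ℝ) * (z - u) ≤ g z - g u := by
          have := neg_abs_le (g z - g u)
          have h2 : |g z - g u| ≤ K * (z - u) := by
            rwa [abs_of_pos (by linarith : (0:ℝ) < z - u)] at hlip
          nlinarith [NNReal.coe_nonneg K]
        refine ⟨z, ?_, huz, le_trans hzw (min_le_left _ _)⟩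
        simp only [hS, Set.mem_setOf_eq] at huS ⊢
        rw [hmz]
        nlinarith [NNReal.coe_nonneg K]
      · -- outside: use the derivative
        have huN : u ∉ N := fun h => huU (hNU h)
        obtain ⟨d, hdderiv, hd0⟩ := hNgood u huab huN
        have hIocsub : Ioc u w ⊆ Icc a b \ {u} := by
          intro t ht
          refine ⟨⟨le_trans huab.1 ht.1.le, le_trans ht.2 (le_trans (min_le_right _ _) hy.2)⟩,
            fun h => absurd (h ▸ ht.1) (lt_irrefl u)⟩
        have hne : (𝓝[Ioc u w] u).NeBot := by
          rw [nhdsWithin_Ioc_eq_nhdsGT huw]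
          exact nhdsGT_neBot u
        have htend : Tendsto (slope g u) (𝓝[Ioc u w] u) (𝓝 d) :=
          (hasDerivWithinAt_iff_tendsto_slope.1 hdderiv).mono_left
            (nhdsWithin_mono _ hIocsub)
        have hev : ∀ᶠ t in 𝓝[Ioc u w] u, slope g u t > -ε :=
          htend.eventually (eventually_gt_nhds (by linarith : -ε < d))
        obtain ⟨z, hslope, hzIoc⟩ := (hev.and (eventually_mem_nhdsWithin)).exists
        have huz : u < z := hzIoc.1
        have hgz : -(ε * (z - u)) ≤ g z - g u := by
          have h1 : slope g u z = (g z - g u) / (z - u) := by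
            rw [slope_def_field]
          rw [h1] at hslope
          have h2 : (0:ℝ) < z - u := by linarith
          calc -(ε * (z - u)) ≤ -ε * (z - u) := by ring_nf; exact le_rfl
            _ ≤ ((g z - g u) / (z - u)) * (z - u) := by
                apply mul_le_mul_of_nonneg_right (le_of_lt hslope) (le_of_lt h2)
            _ = g z - g u := div_mul_cancel₀ _ h2.ne'
        refine ⟨z, ?_, huz, le_trans hzIoc.2 (min_le_left _ _)⟩
        simp only [hS, Set.mem_setOf_eq] at huS ⊢
        have hmuz : m u ≤ m z := hmmono u z huz.le
        nlinarith [NNReal.coe_nonneg K]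
    have hyS : y ∈ S :=
      hSclosed.Icc_subset_of_forall_exists_gt hxS hgt ⟨hxy.le, le_rfl⟩
    simp only [hS, Set.mem_setOf_eq] at hyS
    have hmy : m y ≤ ε := by
      have h1 : volume (U ∩ Ioc x y) ≤ ENNReal.ofReal ε :=
        le_trans (measure_mono Set.inter_subset_left) hUvol.le
      calc m y ≤ (ENNReal.ofReal ε).toReal :=
            ENNReal.toReal_le_toReal (hUfin _ Set.inter_subset_left) ENNReal.ofReal_ne_top |>.2 h1
        _ = ε := ENNReal.toReal_ofReal hε0.le
    nlinarith [NNReal.coe_nonneg K]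
  -- take ε → 0
  have htendsto : Tendsto (fun ε : ℝ => ε * ((y - x) + (K + 2))) (𝓝[>] 0) (𝓝 0) := by
    have h := Continuous.tendsto (f := fun ε : ℝ => ε * ((y - x) + (K + 2)))
      (by continuity) (0:ℝ)
    simp only [zero_mul] at h
    exact h.mono_left nhdsWithin_le_nhds
  have hev : ∀ᶠ ε in 𝓝[>] (0:ℝ), g x - g y ≤ ε * ((y - x) + (K + 2)) := by
    filter_upwards [Ioo_mem_nhdsGT one_pos] with ε hε
    exact key ε hε
  have := ge_of_tendsto htendsto hev
  linarith

lemma constOn_of_ae_deriv_zero {E : Type*} [NormedAddCommGroup E] [InnerProductSpace ℝ E]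
    {f : ℝ → E} {K : NNReal} {a b : ℝ}
    (hf : LipschitzOnWith K f (Icc a b))
    (hd : ∀ᵐ s ∂(volume.restrict (Icc a b)), HasDerivWithinAt f 0 (Icc a b) s) :
    ∀ s ∈ Icc a b, f s = f a := by
  intro s hs
  have ha : a ∈ Icc a b := ⟨le_rfl, hs.1.trans hs.2⟩
  set w : E := f s - f a with hw
  have main : ∀ (c : ℝ) (L : E →L[ℝ] ℝ), c = 1 ∨ c = -1 →
      MonotoneOn (fun u => c * L (f u)) (Icc a b) := by
    intro c L _
    apply monotoneOn_of_ae_deriv_nonneg (K := ‖(c • L)‖₊ * K)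
    · have : LipschitzOnWith (‖(c • L)‖₊ * K) ((c • L) ∘ f) (Icc a b) :=
        (c • L).lipschitz.comp_lipschitzOnWith hf
      have heq : (fun u => c * L (f u)) = (c • L) ∘ f := by
        ext u; simp [ContinuousLinearMap.smul_apply, smul_eq_mul]
      rwa [heq]
    · filter_upwards [hd] with u hu
      refine ⟨(c • L) 0, ?_, ?_⟩
      · have := (c • L).hasFDerivAt.comp_hasDerivWithinAt u hu
        have heq : (fun u => c * L (f u)) = (c • L) ∘ f := by
          ext u; simp [ContinuousLinearMap.smul_apply, smul_eq_mul]
        rwa [heq]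
      · simp
  have hinner : ⟪w, f s⟫ = ⟪w, f a⟫ := by
    have h1 := main 1 (innerSL ℝ w) (Or.inl rfl)
    have h2 := main (-1) (innerSL ℝ w) (Or.inr rfl)
    have e1 : (innerSL ℝ w) (f a) ≤ (innerSL ℝ w) (f s) := by
      have := h1 ha hs hs.1
      simpa using this
    have e2 : (innerSL ℝ w) (f s) ≤ (innerSL ℝ w) (f a) := by
      have := h2 ha hs hs.1
      simp only [neg_mul, one_mul, neg_le_neg_iff] at this
      exact this
    exact le_antisymm e2 e1
  have : ⟪w, w⟫ = (0:ℝ) := by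
    rw [hw, inner_sub_right]
    rw [hinner]
    ring
  have := inner_self_eq_zero.1 this
  rw [hw, sub_eq_zero] at this
  exact this

/-- a future-directed causal curve from the origin to a null future-directed
point `q` is a monotone reparametrization of the null segment from `0` to `q`. -/
theorem causal_curve_to_null_point_is_null_segment (n : ℕ) (q : Mink n) (hq : nullFD q)
    (γ : ℝ → Mink n) (hγ : IsCausalCurveOn γ (Icc 0 1))
    (h0 : γ 0 = 0) (h1 : γ 1 = q) :
    ∃ t : ℝ → ℝ, MonotoneOn t (Icc 0 1) ∧ t 0 = 0 ∧ t 1 = 1 ∧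
      ∀ s ∈ Icc (0:ℝ) 1, γ s = t s • q := by
  obtain ⟨hqne, hqnorm⟩ := hq
  have hq1 : 0 < q.1 := by
    rcases lt_or_eq_of_le (hqnorm ▸ norm_nonneg q.2) with h | h
    · exact h
    · exfalso
      apply hqne
      have h2 : q.2 = 0 := by
        have : ‖q.2‖ = 0 := by rw [hqnorm, ← h]
        exact norm_eq_zero.1 this
      exact Prod.ext h.symm h2
  obtain ⟨K, hK⟩ := hγ.1 0 1 (subset_refl _)
  have hae := hγ.2
  -- the linear functional L p = q.1 * p.1 - ⟪q.2, p.2⟫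
  set L : Mink n →L[ℝ] ℝ :=
    q.1 • ContinuousLinearMap.fst ℝ ℝ (EuclideanSpace ℝ (Fin n)) - (innerSL ℝ q.2).comp (ContinuousLinearMap.snd ℝ ℝ (EuclideanSpace ℝ (Fin n)))
    with hLdef
  have hLapp : ∀ p : Mink n, L p = q.1 * p.1 - ⟪q.2, p.2⟫ := by
    intro p
    simp [hLdef, ContinuousLinearMap.smul_apply, smul_eq_mul]
  -- g1 is monotone
  have hg1mono : MonotoneOn (fun u => L (γ u)) (Icc 0 1) := by
    apply monotoneOn_of_ae_deriv_nonneg (K := ‖L‖₊ * K)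
    · exact L.lipschitz.comp_lipschitzOnWith hK
    · filter_upwards [hae] with u hu
      obtain ⟨v, hv, hvne, hvc⟩ := hu
      refine ⟨L v, L.hasFDerivAt.comp_hasDerivWithinAt u hv, ?_⟩
      rw [hLapp]
      have hCS := real_inner_le_norm q.2 v.2
      have hv2 : (0:ℝ) ≤ v.1 := le_trans (norm_nonneg v.2) hvc
      nlinarith [norm_nonneg v.2]
  -- g1 vanishes on [0,1]
  have hg1zero : ∀ u ∈ Icc (0:ℝ) 1, L (γ u) = 0 := by
    have hL0 : L (γ 0) = 0 := by rw [h0, map_zero]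
    have hL1 : L (γ 1) = 0 := by
      rw [h1, hLapp, real_inner_self_eq_norm_mul_norm, hqnorm]
      ring
    intro u hu
    have h01 : (0:ℝ) ∈ Icc (0:ℝ) 1 := ⟨le_rfl, zero_le_one⟩
    have h11 : (1:ℝ) ∈ Icc (0:ℝ) 1 := ⟨zero_le_one, le_rfl⟩
    have e1 := hg1mono h01 hu hu.1
    have e2 := hg1mono hu h11 hu.2
    simp only at e1 e2
    rw [hL0] at e1
    rw [hL1] at e2
    linarith
  -- the map M p = p.2 - (q.1⁻¹ * p.1) • q.2
  set M : Mink n →L[ℝ] EuclideanSpace ℝ (Fin n) :=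
    ContinuousLinearMap.snd ℝ ℝ (EuclideanSpace ℝ (Fin n)) -
      ((q.1⁻¹ • ContinuousLinearMap.fst ℝ ℝ (EuclideanSpace ℝ (Fin n))).smulRight q.2) with hMdef
  have hMapp : ∀ p : Mink n, M p = p.2 - (q.1⁻¹ * p.1) • q.2 := by
    intro p
    simp [hMdef, ContinuousLinearMap.smulRight_apply, ContinuousLinearMap.smul_apply,
      smul_eq_mul, smul_smul]
  -- a.e. the derivative of M ∘ γ vanishes
  have hMae : ∀ᵐ u ∂(volume.restrict (Icc (0:ℝ) 1)),
      HasDerivWithinAt (fun u => M (γ u)) 0 (Icc 0 1) u := by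
    filter_upwards [hae, ae_restrict_mem measurableSet_Icc] with u hu hmem
    obtain ⟨v, hv, hvne, hvc⟩ := hu
    have hconst : HasDerivWithinAt (fun u => L (γ u)) 0 (Icc 0 1) u :=
      (hasDerivWithinAt_const u _ (0:ℝ)).congr (fun w hw => hg1zero w hw) (hg1zero u hmem)
    have hder : HasDerivWithinAt (fun u => L (γ u)) (L v) (Icc 0 1) u :=
      L.hasFDerivAt.comp_hasDerivWithinAt u hv
    have huniq : L v = 0 := by
      have hud : UniqueDiffWithinAt ℝ (Icc (0:ℝ) 1) u := uniqueDiffOn_Icc zero_lt_one u hmem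
      exact (hder.derivWithin hud).symm.trans (hconst.derivWithin hud)
    have hLv := hLapp v
    rw [huniq] at hLv
    have hinn : ⟪q.2, v.2⟫ = q.1 * v.1 := by linarith
    have hCS := real_inner_le_norm q.2 v.2
    rw [hqnorm] at hCS
    have hn2 : ‖v.2‖ = v.1 := by
      refine le_antisymm hvc (le_of_mul_le_mul_left ?_ hq1)
      rw [← hinn]
      exact hCS
    have hCSeq : ⟪q.2, v.2⟫ = ‖q.2‖ * ‖v.2‖ := by rw [hqnorm, hn2]; exact hinn
    have hpar := inner_eq_norm_mul_iff_real.1 hCSeq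
    rw [hn2, hqnorm] at hpar
    -- hpar : v.1 • q.2 = q.1 • v.2
    have hv2eq : v.2 = (q.1⁻¹ * v.1) • q.2 := by
      have := congrArg (fun z => q.1⁻¹ • z) hpar
      simp only [smul_smul] at this
      rw [inv_mul_cancel₀ hq1.ne', one_smul] at this
      exact this.symm
    have hMv : M v = 0 := by
      rw [hMapp, ← hv2eq, sub_self]
    have := M.hasFDerivAt.comp_hasDerivWithinAt u hv
    rwa [hMv] at this
  -- M ∘ γ is constant, equal to M (γ 0) = 0
  have hMconst := constOn_of_ae_deriv_zero (K := ‖M‖₊ * K)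
    (M.lipschitz.comp_lipschitzOnWith hK) hMae
  have hMzero : ∀ u ∈ Icc (0:ℝ) 1, M (γ u) = 0 := by
    intro u hu
    have h := hMconst u hu
    simp only [Function.comp_apply] at h
    rw [h, h0, map_zero]
  -- monotonicity of the time component
  have hg0mono : MonotoneOn (fun u => (γ u).1) (Icc 0 1) := by
    apply monotoneOn_of_ae_deriv_nonneg (K := ‖(ContinuousLinearMap.fst ℝ ℝ (EuclideanSpace ℝ (Fin n)))‖₊ * K)
    · exact (ContinuousLinearMap.fst ℝ ℝ (EuclideanSpace ℝ (Fin n))).lipschitz.comp_lipschitzOnWith hK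
    · filter_upwards [hae] with u hu
      obtain ⟨v, hv, hvne, hvc⟩ := hu
      exact ⟨v.1, (ContinuousLinearMap.fst ℝ ℝ (EuclideanSpace ℝ (Fin n))).hasFDerivAt.comp_hasDerivWithinAt u hv,
        le_trans (norm_nonneg v.2) hvc⟩
  refine ⟨fun u => q.1⁻¹ * (γ u).1, ?_, ?_, ?_, ?_⟩
  · intro u hu v hv huv
    exact mul_le_mul_of_nonneg_left (hg0mono hu hv huv) (inv_nonneg.2 hq1.le)
  · simp only [h0, Prod.fst_zero, mul_zero]
  · simp only [h1]; exact inv_mul_cancel₀ hq1.ne'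
  · intro u hu
    have hM := hMzero u hu
    rw [hMapp, sub_eq_zero] at hM
    have h1' : ((q.1⁻¹ * (γ u).1) • q).1 = (γ u).1 := by
      simp only [Prod.smul_fst, smul_eq_mul]
      field_simp
    have h2' : ((q.1⁻¹ * (γ u).1) • q).2 = (γ u).2 := by
      simp only [Prod.smul_snd]
      exact hM.symm
    exact Prod.ext h1'.symm h2'.symm
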